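/- Fix T > 0, J ∈ ℕ, and real numbers β₁,…,β_J. Define weights v = (1/J)Σ_j β_j, and recursively w_ℓ = (β_ℓ − v − Σ_{ℓ'<ℓ} w_{ℓ'})/ρ(0) for ℓ = 1,…,J, where ρ(z) = 1/(1+e^{−z}). Define b_T(j) = v + Σ_{ℓ=1}^J w_ℓ ρ(T(j−ℓ)) for j ∈ {1,…,J}. Then lim_{T→∞} b_T(j) = β_j for every j ∈ {1,…,J}. -/

import Mathlib

open Finset Filter

noncomputable def logisticSigmoid (z : ℝ) : ℝ := 1 / (1 + Real.exp (-z))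

lemma logisticSigmoid_zero : logisticSigmoid 0 = 1 / 2 := by
  simp [logisticSigmoid]
  norm_num

lemma sig_lim (c : ℝ) : Tendsto (fun T : ℝ => logisticSigmoid (T * c)) atTop
    (nhds (if 0 < c then 1 else if c = 0 then 1 / 2 else 0)) := by
  unfold logisticSigmoid
  rcases lt_trichotomy c 0 with h | h | h
  · rw [if_neg (by linarith), if_neg (by linarith)]
    have h1 : Tendsto (fun T : ℝ => -(T * c)) atTop atTop := by
      have := tendsto_id.atTop_mul_const (r := -c) (by linarith)
      simpa [mul_neg] using this
    have h2 : Tendsto (fun T : ℝ => 1 + Real.exp (-(T * c))) atTop atTop :=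
      tendsto_atTop_add_const_left _ 1 (Real.tendsto_exp_atTop.comp h1)
    simpa [one_div, Pi.inv_def] using h2.inv_tendsto_atTop
  · simp only [h, mul_zero, neg_zero, Real.exp_zero, lt_irrefl, if_false, if_pos rfl]
    norm_num
  · rw [if_pos h]
    have h1 : Tendsto (fun T : ℝ => -(T * c)) atTop atBot := by
      have := tendsto_id.atTop_mul_const (r := c) h
      exact tendsto_neg_atTop_atBot.comp this
    have h2 : Tendsto (fun T : ℝ => 1 + Real.exp (-(T * c))) atTop (nhds 1) := by
      have := Real.tendsto_exp_atBot.comp h1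
      simpa using tendsto_const_nhds.add this
    have := (tendsto_const_nhds : Tendsto (fun _ : ℝ => (1:ℝ)) atTop (nhds 1)).div h2 one_ne_zero
    simpa [Pi.div_def, one_div] using this

/-- The initialization scheme: a one-hidden-layer sigmoid network with steepness `T`
interpolates the prescribed values `β j` at integer points in the limit `T → ∞`. -/
theorem initialization_interpolates
    (J : ℕ) (hJ : 1 ≤ J) (β : ℕ → ℝ) (v : ℝ)
    (hv : v = (1 / (J : ℝ)) * ∑ i ∈ Finset.Icc 1 J, β i)
    (w : ℕ → ℝ)
    (hw : ∀ ℓ ∈ Finset.Icc 1 J,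
      w ℓ = (β ℓ - v - ∑ ℓ' ∈ Finset.Icc 1 (ℓ - 1), w ℓ') / logisticSigmoid 0) :
    ∀ j ∈ Finset.Icc 1 J,
      Tendsto (fun T : ℝ =>
          v + ∑ ℓ ∈ Finset.Icc 1 J, w ℓ * logisticSigmoid (T * ((j : ℝ) - (ℓ : ℝ))))
        atTop (nhds (β j)) := by
  intro j hj
  set g : ℕ → ℝ := fun ℓ =>
    if 0 < (j : ℝ) - (ℓ : ℝ) then 1 else if (j : ℝ) - (ℓ : ℝ) = 0 then 1 / 2 else 0 with hg
  have htend : Tendsto (fun T : ℝ =>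
      v + ∑ ℓ ∈ Finset.Icc 1 J, w ℓ * logisticSigmoid (T * ((j : ℝ) - (ℓ : ℝ))))
      atTop (nhds (v + ∑ ℓ ∈ Finset.Icc 1 J, w ℓ * g ℓ)) := by
    refine tendsto_const_nhds.add (tendsto_finset_sum _ fun ℓ _ => ?_)
    exact tendsto_const_nhds.mul (sig_lim ((j : ℝ) - (ℓ : ℝ)))
  have hsum : ∑ ℓ ∈ Finset.Icc 1 J, w ℓ * g ℓ
      = (∑ ℓ ∈ Finset.Icc 1 (j - 1), w ℓ) + w j * (1 / 2) := by
    have hpt : ∀ ℓ ∈ Finset.Icc 1 J, w ℓ * g ℓ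
        = (if ℓ ∈ Finset.Icc 1 (j - 1) then w ℓ else 0)
          + (if ℓ = j then w j * (1 / 2) else 0) := by
      intro ℓ hℓ
      simp only [Finset.mem_Icc] at hℓ hj
      rcases lt_trichotomy ℓ j with hlt | heq | hgt
      · have h1 : 0 < (j : ℝ) - (ℓ : ℝ) := by
          have : (ℓ : ℝ) < (j : ℝ) := by exact_mod_cast hlt
          linarith
        rw [hg]
        simp only [if_pos h1, mul_one]
        rw [if_pos (Finset.mem_Icc.mpr ⟨hℓ.1, by omega⟩), if_neg (by omega)]
        ring
      · subst heq
        have h1 : ¬ (0 : ℝ) < (ℓ : ℝ) - (ℓ : ℝ) := by simp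
        rw [hg]
        have h3 : ¬ ℓ ∈ Finset.Icc 1 (ℓ - 1) := by simp [Finset.mem_Icc]; omega
        simp [h1, h3]
      · have h1 : ¬ (0 : ℝ) < (j : ℝ) - (ℓ : ℝ) := by
          have : (j : ℝ) ≤ (ℓ : ℝ) := by exact_mod_cast hgt.le
          linarith
        have h2 : (j : ℝ) - (ℓ : ℝ) ≠ 0 := by
          have : (j : ℝ) < (ℓ : ℝ) := by exact_mod_cast hgt
          linarith
        rw [hg]
        simp only [if_neg h1, if_neg h2, mul_zero]
        rw [if_neg (by simp [Finset.mem_Icc]; omega), if_neg (by omega)]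
        ring
    rw [Finset.sum_congr rfl hpt, Finset.sum_add_distrib]
    congr 1
    · rw [Finset.sum_ite_mem, Finset.inter_eq_right.mpr]
      intro x hx
      simp only [Finset.mem_Icc] at hx hj ⊢
      omega
    · rw [Finset.sum_ite_eq' (Finset.Icc 1 J) j, if_pos hj]
  have hwj : w j * (1 / 2) = β j - v - ∑ ℓ ∈ Finset.Icc 1 (j - 1), w ℓ := by
    have := hw j hj
    rw [logisticSigmoid_zero] at this
    rw [this]
    ring
  have hfin : v + ∑ ℓ ∈ Finset.Icc 1 J, w ℓ * g ℓ = β j := by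
    rw [hsum, hwj]; ring
  rwa [hfin] at htend
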